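/- Let I ⊂ ℝ be a bounded closed nondegenerate interval and f ∈ L^1(I). Then t ∈ ℝ minimizes t ↦ ‖f − t‖_1 if and only if t belongs to the set B^f of balanced values of f, i.e., if and only if |λ({f > t}) − λ({f < t})| ≤ λ({f = t}). -/

import Mathlib

open Set MeasureTheory Filter Topology
open scoped Classical

section Aux

variable {α : Type*} [MeasurableSpace α] {μ : Measure α} [IsFiniteMeasure μ]

lemma step_fun_eq (S : Set α) (c : ℝ) :
    (fun x => if x ∈ S then c else -c)
      = fun x => S.indicator (fun _ => c + c) x + (-c) := by
  funext x
  by_cases hx : x ∈ S <;> simp [Set.indicator, hx]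

lemma step_integrable (S : Set α) (hS : MeasurableSet S) (c : ℝ) :
    Integrable (fun x => if x ∈ S then c else -c) μ := by
  rw [step_fun_eq]
  exact ((integrable_const (c + c)).indicator hS).add (integrable_const (-c))

/-- Integral of the step function `if x ∈ S then c else -c`. -/
lemma step_integral (S : Set α) (hS : MeasurableSet S) (c : ℝ) :
    ∫ x, (if x ∈ S then c else -c) ∂μ = c * (μ S).toReal - c * (μ Sᶜ).toReal := by
  rw [step_fun_eq,
    integral_add ((integrable_const (c + c)).indicator hS) (integrable_const (-c)),
    integral_indicator hS, setIntegral_const, integral_const]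
  have htot : (μ S).toReal + (μ Sᶜ).toReal = (μ univ).toReal := by
    rw [← ENNReal.toReal_add (measure_ne_top μ S) (measure_ne_top μ Sᶜ),
      measure_add_measure_compl hS]
  simp only [smul_eq_mul, measureReal_def]
  rw [← htot]
  ring

/-- Lower bound for an integral in terms of a pointwise step-function lower bound. -/
lemma step_le (S : Set α) (hS : MeasurableSet S) (c : ℝ) (g : α → ℝ) (hg : Integrable g μ)
    (hpt : ∀ x, (if x ∈ S then c else -c) ≤ g x) :
    c * (μ S).toReal - c * (μ Sᶜ).toReal ≤ ∫ x, g x ∂μ := by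
  rw [← step_integral S hS c]
  exact integral_mono (step_integrable S hS c) hg hpt

lemma inv_nat_mono {m n : ℕ} (hmn : m ≤ n) : ((n : ℝ) + 1)⁻¹ ≤ ((m : ℝ) + 1)⁻¹ := by
  have h : (m : ℝ) ≤ n := Nat.cast_le.mpr hmn
  apply inv_anti₀ (by positivity)
  linarith

/-- Key general lemma: on a finite measure space, for measurable integrable `f`,
`t` minimizes `s ↦ ∫ |f - s|` iff `t` is a balanced value. -/
lemma key (f : α → ℝ) (hm : Measurable f) (hf : Integrable f μ) (t : ℝ) :
    (∀ s : ℝ, ∫ x, |f x - t| ∂μ ≤ ∫ x, |f x - s| ∂μ) ↔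
      |(μ {x | t < f x}).toReal - (μ {x | f x < t}).toReal| ≤ (μ {x | f x = t}).toReal := by
  have hint : ∀ s : ℝ, Integrable (fun x => |f x - s|) μ :=
    fun s => (hf.sub (integrable_const s)).abs
  -- measure splittings
  have hle_split : (μ {x | f x ≤ t}).toReal
      = (μ {x | f x < t}).toReal + (μ {x | f x = t}).toReal := by
    have hset : {x | f x ≤ t} = {x | f x < t} ∪ {x | f x = t} := by
      ext x; simp only [Set.mem_setOf_eq, Set.mem_union]; exact le_iff_lt_or_eq
    have hdisj : Disjoint {x | f x < t} {x | f x = t} := by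
      rw [Set.disjoint_left]; intro x hx hx'
      exact absurd hx' (ne_of_lt hx)
    rw [hset, measure_union hdisj (hm (measurableSet_singleton t)),
      ENNReal.toReal_add (measure_ne_top μ _) (measure_ne_top μ _)]
  have hge_split : (μ {x | t ≤ f x}).toReal
      = (μ {x | t < f x}).toReal + (μ {x | f x = t}).toReal := by
    have hset : {x | t ≤ f x} = {x | t < f x} ∪ {x | f x = t} := by
      ext x; simp only [Set.mem_setOf_eq, Set.mem_union]
      rw [le_iff_lt_or_eq]
      exact or_congr Iff.rfl eq_comm
    have hdisj : Disjoint {x | t < f x} {x | f x = t} := by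
      rw [Set.disjoint_left]; intro x hx hx'
      exact absurd hx'.symm (ne_of_lt hx)
    rw [hset, measure_union hdisj (hm (measurableSet_singleton t)),
      ENNReal.toReal_add (measure_ne_top μ _) (measure_ne_top μ _)]
  have hcompl_le : {x | f x ≤ t}ᶜ = {x | t < f x} := by ext x; simp
  have hcompl_ge : {x | t ≤ f x}ᶜ = {x | f x < t} := by ext x; simp
  constructor
  · -- minimizer → balanced
    intro hmin
    rw [abs_sub_le_iff]
    constructor
    · -- μ{t<f} - μ{f<t} ≤ μ{f=t}
      have hstep : ∀ s : ℝ, t < s → (μ {x | s ≤ f x}).toReal ≤ (μ {x | f x < s}).toReal := by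
        intro s hs
        have hcompl : {x | s ≤ f x}ᶜ = {x | f x < s} := by ext x; simp
        have hkey := step_le (μ := μ) {x | s ≤ f x} (hm measurableSet_Ici) (s - t)
          (fun x => |f x - t| - |f x - s|) ((hint t).sub (hint s))
          (fun x => by
            by_cases hx : x ∈ {x | s ≤ f x}
            · rw [if_pos hx]
              simp only [Set.mem_setOf_eq] at hx
              have h1 : |f x - t| = f x - t := abs_of_nonneg (by linarith)
              have h2 : |f x - s| = f x - s := abs_of_nonneg (by linarith)
              rw [h1, h2]; linarith
            · rw [if_neg hx]
              have h4 := abs_sub_abs_le_abs_sub (f x - s) (f x - t)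
              have h3 : |f x - s - (f x - t)| = s - t := by
                rw [show f x - s - (f x - t) = -(s - t) by ring, abs_neg,
                  abs_of_pos (by linarith)]
              linarith)
        rw [integral_sub (hint t) (hint s), hcompl] at hkey
        have hFn : (∫ x, |f x - t| ∂μ) - ∫ x, |f x - s| ∂μ ≤ 0 := by
          have := hmin s; linarith
        nlinarith [hkey, hFn, sub_pos.mpr hs]
      -- pass to the limit s ↓ t
      set u : ℕ → ℝ := fun n => t + ((n : ℝ) + 1)⁻¹ with hu
      have hupos : ∀ n : ℕ, t < u n := fun n => by
        have h0 : (0:ℝ) < ((n : ℝ) + 1)⁻¹ := by positivity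
        show t < t + ((n : ℝ) + 1)⁻¹
        linarith
      have hUnion : (⋃ n, {x | u n ≤ f x}) = {x | t < f x} := by
        ext x
        simp only [Set.mem_iUnion, Set.mem_setOf_eq]
        constructor
        · rintro ⟨n, hn⟩; exact lt_of_lt_of_le (hupos n) hn
        · intro hx
          obtain ⟨n, hn⟩ := exists_nat_one_div_lt (sub_pos.mpr hx)
          rw [one_div] at hn
          refine ⟨n, ?_⟩
          show t + ((n : ℝ) + 1)⁻¹ ≤ f x
          linarith
      have hInter : (⋂ n, {x | f x < u n}) = {x | f x ≤ t} := by
        ext x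
        simp only [Set.mem_iInter, Set.mem_setOf_eq]
        constructor
        · intro hx
          by_contra hc
          push_neg at hc
          obtain ⟨n, hn⟩ := exists_nat_one_div_lt (sub_pos.mpr hc)
          rw [one_div] at hn
          have h5 : f x < t + ((n : ℝ) + 1)⁻¹ := hx n
          linarith
        · intro hx n; exact lt_of_le_of_lt hx (hupos n)
      have humono : ∀ {m n : ℕ}, m ≤ n → u n ≤ u m := by
        intro m n hmn
        show t + ((n : ℝ) + 1)⁻¹ ≤ t + ((m : ℝ) + 1)⁻¹
        have := inv_nat_mono hmn
        linarith
      have hmono : Monotone (fun n : ℕ => {x | u n ≤ f x}) := by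
        intro m n hmn x hx
        simp only [Set.mem_setOf_eq] at hx ⊢
        exact le_trans (humono hmn) hx
      have hanti : Antitone (fun n : ℕ => {x | f x < u n}) := by
        intro m n hmn x hx
        simp only [Set.mem_setOf_eq] at hx ⊢
        exact lt_of_lt_of_le hx (humono hmn)
      have hT1 : Tendsto (fun n => (μ {x | u n ≤ f x}).toReal) atTop
          (𝓝 ((μ {x | t < f x}).toReal)) := by
        have h6 := MeasureTheory.tendsto_measure_iUnion_atTop (μ := μ) hmono
        rw [hUnion] at h6
        exact (ENNReal.tendsto_toReal (measure_ne_top μ _)).comp h6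
      have hT2 : Tendsto (fun n => (μ {x | f x < u n}).toReal) atTop
          (𝓝 ((μ {x | f x ≤ t}).toReal)) := by
        have h6 := MeasureTheory.tendsto_measure_iInter_atTop (μ := μ)
          (s := fun n => {x | f x < u n})
          (fun n => (hm measurableSet_Iio).nullMeasurableSet) hanti
          ⟨0, measure_ne_top μ _⟩
        rw [hInter] at h6
        exact (ENNReal.tendsto_toReal (measure_ne_top μ _)).comp h6
      have hlim := le_of_tendsto_of_tendsto' hT1 hT2 (fun n => hstep (u n) (hupos n))
      rw [hle_split] at hlim
      linarith
    · -- μ{f<t} - μ{t<f} ≤ μ{f=t}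
      have hstep : ∀ s : ℝ, s < t → (μ {x | f x ≤ s}).toReal ≤ (μ {x | s < f x}).toReal := by
        intro s hs
        have hcompl : {x | f x ≤ s}ᶜ = {x | s < f x} := by ext x; simp
        have hkey := step_le (μ := μ) {x | f x ≤ s} (hm measurableSet_Iic) (t - s)
          (fun x => |f x - t| - |f x - s|) ((hint t).sub (hint s))
          (fun x => by
            by_cases hx : x ∈ {x | f x ≤ s}
            · rw [if_pos hx]
              simp only [Set.mem_setOf_eq] at hx
              have h1 : |f x - t| = t - f x := by
                rw [abs_of_nonpos (by linarith)]; ring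
              have h2 : |f x - s| = s - f x := by
                rw [abs_of_nonpos (by linarith)]; ring
              rw [h1, h2]; linarith
            · rw [if_neg hx]
              have h4 := abs_sub_abs_le_abs_sub (f x - s) (f x - t)
              have h3 : |f x - s - (f x - t)| = t - s := by
                rw [show f x - s - (f x - t) = t - s by ring, abs_of_pos (by linarith)]
              linarith)
        rw [integral_sub (hint t) (hint s), hcompl] at hkey
        have hFn : (∫ x, |f x - t| ∂μ) - ∫ x, |f x - s| ∂μ ≤ 0 := by
          have := hmin s; linarith
        nlinarith [hkey, hFn, sub_pos.mpr hs]
      set u : ℕ → ℝ := fun n => t - ((n : ℝ) + 1)⁻¹ with hu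
      have hupos : ∀ n : ℕ, u n < t := fun n => by
        have h0 : (0:ℝ) < ((n : ℝ) + 1)⁻¹ := by positivity
        show t - ((n : ℝ) + 1)⁻¹ < t
        linarith
      have hUnion : (⋃ n, {x | f x ≤ u n}) = {x | f x < t} := by
        ext x
        simp only [Set.mem_iUnion, Set.mem_setOf_eq]
        constructor
        · rintro ⟨n, hn⟩; exact lt_of_le_of_lt hn (hupos n)
        · intro hx
          obtain ⟨n, hn⟩ := exists_nat_one_div_lt (sub_pos.mpr hx)
          rw [one_div] at hn
          refine ⟨n, ?_⟩
          show f x ≤ t - ((n : ℝ) + 1)⁻¹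
          linarith
      have hInter : (⋂ n, {x | u n < f x}) = {x | t ≤ f x} := by
        ext x
        simp only [Set.mem_iInter, Set.mem_setOf_eq]
        constructor
        · intro hx
          by_contra hc
          push_neg at hc
          obtain ⟨n, hn⟩ := exists_nat_one_div_lt (sub_pos.mpr hc)
          rw [one_div] at hn
          have h5 : t - ((n : ℝ) + 1)⁻¹ < f x := hx n
          linarith
        · intro hx n; exact lt_of_lt_of_le (hupos n) hx
      have humono : ∀ {m n : ℕ}, m ≤ n → u m ≤ u n := by
        intro m n hmn
        show t - ((m : ℝ) + 1)⁻¹ ≤ t - ((n : ℝ) + 1)⁻¹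
        have := inv_nat_mono hmn
        linarith
      have hmono : Monotone (fun n : ℕ => {x | f x ≤ u n}) := by
        intro m n hmn x hx
        simp only [Set.mem_setOf_eq] at hx ⊢
        exact le_trans hx (humono hmn)
      have hanti : Antitone (fun n : ℕ => {x | u n < f x}) := by
        intro m n hmn x hx
        simp only [Set.mem_setOf_eq] at hx ⊢
        exact lt_of_le_of_lt (humono hmn) hx
      have hT1 : Tendsto (fun n => (μ {x | f x ≤ u n}).toReal) atTop
          (𝓝 ((μ {x | f x < t}).toReal)) := by
        have h6 := MeasureTheory.tendsto_measure_iUnion_atTop (μ := μ) hmono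
        rw [hUnion] at h6
        exact (ENNReal.tendsto_toReal (measure_ne_top μ _)).comp h6
      have hT2 : Tendsto (fun n => (μ {x | u n < f x}).toReal) atTop
          (𝓝 ((μ {x | t ≤ f x}).toReal)) := by
        have h6 := MeasureTheory.tendsto_measure_iInter_atTop (μ := μ)
          (s := fun n => {x | u n < f x})
          (fun n => (hm measurableSet_Ioi).nullMeasurableSet) hanti
          ⟨0, measure_ne_top μ _⟩
        rw [hInter] at h6
        exact (ENNReal.tendsto_toReal (measure_ne_top μ _)).comp h6
      have hlim := le_of_tendsto_of_tendsto' hT1 hT2 (fun n => hstep (u n) (hupos n))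
      rw [hge_split] at hlim
      linarith
  · -- balanced → minimizer
    intro hbal s
    rw [abs_sub_le_iff] at hbal
    obtain ⟨h1, h2⟩ := hbal
    rcases lt_trichotomy t s with hts | hts | hts
    · -- s > t : use S = {f ≤ t}, c = s - t
      have hkey := step_le (μ := μ) {x | f x ≤ t} (hm measurableSet_Iic) (s - t)
        (fun x => |f x - s| - |f x - t|) ((hint s).sub (hint t))
        (fun x => by
          by_cases hx : x ∈ {x | f x ≤ t}
          · rw [if_pos hx]
            simp only [Set.mem_setOf_eq] at hx
            have h1' : |f x - s| = s - f x := by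
              rw [abs_of_nonpos (by linarith)]; ring
            have h2' : |f x - t| = t - f x := by
              rw [abs_of_nonpos (by linarith)]; ring
            rw [h1', h2']; linarith
          · rw [if_neg hx]
            have h4 := abs_sub_abs_le_abs_sub (f x - t) (f x - s)
            have h3 : |f x - t - (f x - s)| = s - t := by
              rw [show f x - t - (f x - s) = s - t by ring, abs_of_pos (by linarith)]
            linarith)
      rw [integral_sub (hint s) (hint t), hcompl_le] at hkey
      have hst : (0:ℝ) < s - t := by linarith
      have hpos : 0 ≤ (s - t) * (μ {x | f x ≤ t}).toReal
          - (s - t) * (μ {x | t < f x}).toReal := by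
        rw [hle_split]
        nlinarith [h1]
      linarith
    · rw [hts]
    · -- s < t : use S = {t ≤ f}, c = t - s
      have hkey := step_le (μ := μ) {x | t ≤ f x} (hm measurableSet_Ici) (t - s)
        (fun x => |f x - s| - |f x - t|) ((hint s).sub (hint t))
        (fun x => by
          by_cases hx : x ∈ {x | t ≤ f x}
          · rw [if_pos hx]
            simp only [Set.mem_setOf_eq] at hx
            have h1' : |f x - s| = f x - s := abs_of_nonneg (by linarith)
            have h2' : |f x - t| = f x - t := abs_of_nonneg (by linarith)
            rw [h1', h2']; linarith
          · rw [if_neg hx]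
            have h4 := abs_sub_abs_le_abs_sub (f x - t) (f x - s)
            have h3 : |f x - t - (f x - s)| = t - s := by
              rw [show f x - t - (f x - s) = -(t - s) by ring, abs_neg,
                abs_of_pos (by linarith)]
            linarith)
      rw [integral_sub (hint s) (hint t), hcompl_ge] at hkey
      have hst : (0:ℝ) < t - s := by linarith
      have hpos : 0 ≤ (t - s) * (μ {x | t ≤ f x}).toReal
          - (t - s) * (μ {x | f x < t}).toReal := by
        rw [hge_split]
        nlinarith [h2]
      linarith

end Aux

theorem stmt10 (a b : ℝ) (hab : a < b) (f : ℝ → ℝ)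
    (hf : Integrable f (volume.restrict (Set.Icc a b))) (t : ℝ) :
    (∀ s : ℝ,
        ∫ x in Set.Icc a b, |f x - t| ≤ ∫ x in Set.Icc a b, |f x - s|)
      ↔ |(volume {x | x ∈ Set.Icc a b ∧ t < f x}).toReal
            - (volume {x | x ∈ Set.Icc a b ∧ f x < t}).toReal|
          ≤ (volume {x | x ∈ Set.Icc a b ∧ f x = t}).toReal := by
  set μ := volume.restrict (Set.Icc a b) with hμ
  haveI : IsFiniteMeasure μ := by
    constructor
    rw [hμ, Measure.restrict_apply_univ]
    exact measure_Icc_lt_top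
  -- pass to a measurable representative
  set g : ℝ → ℝ := hf.1.mk f with hg
  have hfg : f =ᶠ[ae μ] g := hf.1.ae_eq_mk
  have hgm : Measurable g := hf.1.stronglyMeasurable_mk.measurable
  have hgi : Integrable g μ := hf.congr hfg
  -- rewrite the set measures
  have hms : ∀ (P : ℝ → Prop), (∀ᵐ x ∂μ, P (f x) = P (g x)) →
      volume {x | x ∈ Set.Icc a b ∧ P (f x)} = μ {x | P (g x)} := by
    intro P hP
    have h1 : {x | x ∈ Set.Icc a b ∧ P (f x)} = {x | P (f x)} ∩ Set.Icc a b := by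
      ext x; simp [and_comm]
    rw [h1, ← Measure.restrict_apply' measurableSet_Icc, ← hμ]
    exact measure_congr hP
  have hPlt : (∀ᵐ x ∂μ, (t < f x) = (t < g x)) := hfg.mono fun x hx => by rw [hx]
  have hPgt : (∀ᵐ x ∂μ, (f x < t) = (g x < t)) := hfg.mono fun x hx => by rw [hx]
  have hPeq : (∀ᵐ x ∂μ, (f x = t) = (g x = t)) := hfg.mono fun x hx => by rw [hx]
  rw [hms (fun y => t < y) hPlt, hms (fun y => y < t) hPgt, hms (fun y => y = t) hPeq]
  have hint_eq : ∀ s : ℝ, (∫ x in Set.Icc a b, |f x - s|) = ∫ x, |g x - s| ∂μ := by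
    intro s
    exact integral_congr_ae (hfg.mono fun x hx => by
      show |f x - s| = |g x - s|
      rw [hx])
  constructor
  · intro hmin
    rw [← key g hgm hgi t]
    intro s
    rw [← hint_eq t, ← hint_eq s]
    exact hmin s
  · intro hbal s
    rw [hint_eq t, hint_eq s]
    exact (key g hgm hgi t).mpr hbal s
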